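/- Let μ > 0. The function λ_μ is differentiable on (0,∞) with λ_μ'(r) = (tanh(√μ r) + √μ r·(1 - tanh²(√μ r))) / (2√μ·λ_μ(r)) for r > 0; moreover 0 < λ_μ'(r) < 1 for every r > 0, λ_μ'(r) → 1 as r → 0⁺, and λ_μ'(r) → 0 as r → +∞. -/

import Mathlib

/-!
Statement 6: differentiability of the dispersion function `λ_μ` on `(0,∞)`, the
explicit formula for its derivative (the group velocity), the bounds
`0 < λ_μ'(r) < 1`, and the limits `λ_μ'(r) → 1` as `r → 0⁺` and `λ_μ'(r) → 0`
as `r → +∞`.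
-/

noncomputable section

open Filter

/-- The dispersion function of the linear water wave problem. -/
def lamμ (μ : ℝ) (r : ℝ) : ℝ :=
  Real.sign r * Real.sqrt (r * Real.tanh (Real.sqrt μ * r) / Real.sqrt μ)

section AuxTanh
open Real

lemma myHasDerivAt_tanh (x : ℝ) : HasDerivAt Real.tanh (1 - Real.tanh x ^ 2) x := by
  have h := (Real.hasDerivAt_sinh x).div (Real.hasDerivAt_cosh x) (ne_of_gt (Real.cosh_pos x))
  have hfun : Real.tanh = fun x => Real.sinh x / Real.cosh x :=
    funext fun x => Real.tanh_eq_sinh_div_cosh x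
  rw [hfun]
  refine h.congr_deriv ?_
  have hc := Real.cosh_pos x
  have h1 := Real.cosh_sq_sub_sinh_sq x
  have hc2 : Real.cosh x ^ 2 ≠ 0 := by positivity
  beta_reduce
  rw [div_pow, div_eq_iff hc2, sub_mul, div_mul_cancel₀ _ hc2]
  nlinarith [h1]

lemma mytanh_pos {x : ℝ} (hx : 0 < x) : 0 < Real.tanh x := by
  rw [Real.tanh_eq_sinh_div_cosh]
  exact div_pos (Real.sinh_pos_iff.mpr hx) (Real.cosh_pos x)

lemma mytanh_lt_one (x : ℝ) : Real.tanh x < 1 := by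
  rw [Real.tanh_eq_sinh_div_cosh]
  rw [div_lt_one (Real.cosh_pos x)]
  nlinarith [Real.cosh_sub_sinh x, Real.exp_pos (-x)]

lemma myneg_one_lt_tanh (x : ℝ) : -1 < Real.tanh x := by
  have := mytanh_lt_one (-x)
  rw [Real.tanh_neg] at this
  linarith

lemma mytanh_sq_lt_one (x : ℝ) : Real.tanh x ^ 2 < 1 := by
  nlinarith [mytanh_lt_one x, myneg_one_lt_tanh x]

lemma mytanh_lt_self {x : ℝ} (hx : 0 < x) : Real.tanh x < x := by
  have hmono : StrictMonoOn (fun y => y - Real.tanh y) (Set.Ici (0:ℝ)) := by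
    apply strictMonoOn_of_deriv_pos (convex_Ici 0)
    · exact (continuous_id.sub
        (Differentiable.continuous fun y => (myHasDerivAt_tanh y).differentiableAt)).continuousOn
    · intro y hy
      rw [interior_Ici] at hy
      have hd : HasDerivAt (fun y => y - Real.tanh y) (1 - (1 - Real.tanh y ^ 2)) y :=
        (hasDerivAt_id y).sub (myHasDerivAt_tanh y)
      rw [hd.deriv]
      have := mytanh_pos hy
      nlinarith
  have := hmono (Set.mem_Ici.mpr le_rfl) (Set.mem_Ici.mpr hx.le) hx
  simpa [Real.tanh_zero] using this

lemma my_key_ineq {x : ℝ} (hx : 0 < x) : x * (1 - Real.tanh x ^ 2) < Real.tanh x := by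
  have hc := Real.cosh_pos x
  have h1 := Real.cosh_sq_sub_sinh_sq x
  have hs := Real.self_lt_sinh_iff.mpr hx
  have hcc := Real.one_le_cosh x
  rw [Real.tanh_eq_sinh_div_cosh]
  rw [div_pow]
  have hsp : 0 < Real.sinh x := Real.sinh_pos_iff.mpr hx
  have h2 : 1 - Real.sinh x ^ 2 / Real.cosh x ^ 2 = 1 / Real.cosh x ^ 2 := by
    field_simp
    linarith [h1]
  rw [h2, mul_one_div, div_lt_div_iff₀ (by positivity) hc]
  nlinarith [mul_lt_mul_of_pos_right hs hc,
    mul_le_mul_of_nonneg_left (by nlinarith : Real.cosh x ≤ Real.cosh x ^ 2) hsp.le]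

lemma mytanh_mono : Monotone Real.tanh := by
  apply monotone_of_deriv_nonneg
  · exact fun y => (myHasDerivAt_tanh y).differentiableAt
  · intro y
    rw [(myHasDerivAt_tanh y).deriv]
    nlinarith [mytanh_sq_lt_one y]

lemma mysqrt_atTop : Filter.Tendsto Real.sqrt Filter.atTop Filter.atTop := by
  apply Filter.tendsto_atTop_atTop.mpr
  intro b
  refine ⟨b ^ 2, fun a ha => ?_⟩
  have h1 : Real.sqrt (b ^ 2) ≤ Real.sqrt a := Real.sqrt_le_sqrt ha
  have h2 : Real.sqrt (b ^ 2) = |b| := Real.sqrt_sq_eq_abs b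
  calc b ≤ |b| := le_abs_self b
    _ ≤ Real.sqrt a := h2 ▸ h1

end AuxTanh

theorem lamμ_deriv_formula_bounds_limits (μ : ℝ) (hμ : 0 < μ) :
    (∀ r : ℝ, 0 < r →
      HasDerivAt (lamμ μ)
        ((Real.tanh (Real.sqrt μ * r)
            + Real.sqrt μ * r * (1 - (Real.tanh (Real.sqrt μ * r)) ^ 2))
          / (2 * Real.sqrt μ * lamμ μ r)) r)
    ∧ (∀ r : ℝ, 0 < r → 0 < deriv (lamμ μ) r ∧ deriv (lamμ μ) r < 1)
    ∧ Tendsto (deriv (lamμ μ)) (nhdsWithin 0 (Set.Ioi 0)) (nhds 1)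
    ∧ Tendsto (deriv (lamμ μ)) atTop (nhds 0) := by
  have hs : 0 < Real.sqrt μ := Real.sqrt_pos.mpr hμ
  set s : ℝ := Real.sqrt μ with hsdef
  set g : ℝ → ℝ := fun r => r * Real.tanh (s * r) / s with hgdef
  set N : ℝ → ℝ := fun r => Real.tanh (s * r) + s * r * (1 - Real.tanh (s * r) ^ 2) with hNdef
  set F : ℝ → ℝ := fun r => N r / (2 * s * lamμ μ r) with hFdef
  have hgpos : ∀ r : ℝ, 0 < r → 0 < g r := by
    intro r hr
    have h1 : 0 < Real.tanh (s * r) := mytanh_pos (mul_pos hs hr)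
    have : g r = r * Real.tanh (s * r) / s := rfl
    rw [this]; positivity
  have hlam : ∀ r : ℝ, 0 < r → lamμ μ r = Real.sqrt (g r) := by
    intro r hr
    simp only [lamμ, Real.sign_of_pos hr, one_mul, hgdef, ← hsdef]
  have hlampos : ∀ r : ℝ, 0 < r → 0 < lamμ μ r := by
    intro r hr; rw [hlam r hr]; exact Real.sqrt_pos.mpr (hgpos r hr)
  have hNpos : ∀ r : ℝ, 0 < r → 0 < N r := by
    intro r hr
    have h1 : 0 < Real.tanh (s * r) := mytanh_pos (mul_pos hs hr)
    have h2 : Real.tanh (s * r) ^ 2 < 1 := mytanh_sq_lt_one (s * r)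
    have h3 : 0 < s * r := mul_pos hs hr
    have : N r = Real.tanh (s * r) + s * r * (1 - Real.tanh (s * r) ^ 2) := rfl
    rw [this]; nlinarith
  -- the derivative
  have hD : ∀ r : ℝ, 0 < r → HasDerivAt (lamμ μ) (F r) r := by
    intro r hr
    have hlin : HasDerivAt (fun y : ℝ => s * y) s r := by
      simpa using (hasDerivAt_id r).const_mul s
    have h1 : HasDerivAt (fun y : ℝ => Real.tanh (s * y))
        ((1 - Real.tanh (s * r) ^ 2) * s) r := (myHasDerivAt_tanh (s * r)).comp r hlin
    have h2 : HasDerivAt (fun y : ℝ => y * Real.tanh (s * y))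
        (1 * Real.tanh (s * r) + r * ((1 - Real.tanh (s * r) ^ 2) * s)) r :=
      (hasDerivAt_id r).mul h1
    have h3 : HasDerivAt g
        ((1 * Real.tanh (s * r) + r * ((1 - Real.tanh (s * r) ^ 2) * s)) / s) r :=
      h2.div_const s
    have h4 := (Real.hasDerivAt_sqrt (ne_of_gt (hgpos r hr))).comp r h3
    have hev : lamμ μ =ᶠ[nhds r] fun y => Real.sqrt (g y) :=
      eventually_of_mem (isOpen_Ioi.mem_nhds hr) fun y hy => hlam y hy
    have h5 := h4.congr_of_eventuallyEq hev
    refine h5.congr_deriv ?_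
    symm
    have hw : Real.sqrt (g r) ≠ 0 := ne_of_gt (Real.sqrt_pos.mpr (hgpos r hr))
    have hlamr := hlam r hr
    show N r / (2 * s * lamμ μ r) = _
    rw [hlam r hr, hNdef]
    field_simp
  have hderiv : ∀ r : ℝ, 0 < r → deriv (lamμ μ) r = F r := fun r hr => (hD r hr).deriv
  -- denominator identity
  have hden : ∀ r : ℝ, 0 < r →
      2 * s * lamμ μ r = 2 * Real.sqrt (s * r * Real.tanh (s * r)) := by
    intro r hr
    rw [hlam r hr]
    have : s * Real.sqrt (g r) = Real.sqrt (s ^ 2 * g r) := by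
      rw [Real.sqrt_mul (by positivity), Real.sqrt_sq hs.le]
    rw [mul_assoc, this]
    congr 2
    have : g r = r * Real.tanh (s * r) / s := rfl
    rw [this]
    field_simp
  refine ⟨fun r hr => hD r hr, ?_, ?_, ?_⟩
  · -- bounds
    intro r hr
    rw [hderiv r hr]
    have hdenpos : 0 < 2 * s * lamμ μ r := by
      have := hlampos r hr; positivity
    constructor
    · exact div_pos (hNpos r hr) hdenpos
    · rw [hFdef]
      show N r / (2 * s * lamμ μ r) < 1
      rw [div_lt_one hdenpos, hden r hr]
      set x := s * r with hxdef
      have hx : 0 < x := mul_pos hs hr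
      set t := Real.tanh x with htdef
      have ht : 0 < t := mytanh_pos hx
      have hA : x * (1 - t ^ 2) < t := my_key_ineq hx
      have hB : t < x := mytanh_lt_self hx
      have hNr : N r = t + x * (1 - t ^ 2) := rfl
      rw [hNr]
      have hsq : (t + x * (1 - t ^ 2)) ^ 2 < 4 * (x * t) := by
        have ha : 0 < x * (1 - t ^ 2) := by nlinarith [mytanh_sq_lt_one x]
        nlinarith [mul_pos (sub_pos.mpr hA) (by nlinarith : 0 < 3 * t + x * (1 - t ^ 2)),
          mul_pos ht (sub_pos.mpr hB)]
      have hnn : 0 ≤ t + x * (1 - t ^ 2) := by nlinarith [mytanh_sq_lt_one x]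
      have h2s : 2 * Real.sqrt (x * t) = Real.sqrt (4 * (x * t)) := by
        rw [Real.sqrt_mul (by norm_num : (0:ℝ) ≤ 4), show Real.sqrt 4 = 2 by
          rw [show (4:ℝ) = 2 ^ 2 by norm_num, Real.sqrt_sq (by norm_num)]]
      rw [h2s]
      exact (Real.lt_sqrt hnn).mpr hsq
  · -- limit at 0+
    have ctanh : Continuous Real.tanh :=
      Differentiable.continuous fun y => (myHasDerivAt_tanh y).differentiableAt
    have htanhdiv : Tendsto (fun x : ℝ => Real.tanh x / x)
        (nhdsWithin 0 (Set.Ioi 0)) (nhds 1) := by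
      have h : HasDerivAt Real.tanh 1 0 := by
        have := myHasDerivAt_tanh 0
        rw [Real.tanh_zero] at this
        norm_num at this
        exact this
      have h2 := hasDerivAt_iff_tendsto_slope.mp h
      have h3 : Tendsto (slope Real.tanh 0) (nhdsWithin 0 (Set.Ioi 0)) (nhds 1) :=
        h2.mono_left (nhdsWithin_mono 0 fun y hy => ne_of_gt hy)
      refine h3.congr' ?_
      filter_upwards [self_mem_nhdsWithin] with y _
      simp [slope_def_field, Real.tanh_zero]
    have hmap0 : Tendsto (fun r : ℝ => s * r) (nhdsWithin 0 (Set.Ioi 0)) (nhds 0) := by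
      have hcont : Continuous (fun r : ℝ => s * r) := continuous_const.mul continuous_id
      have h := hcont.tendsto 0
      rw [mul_zero] at h
      exact h.mono_left nhdsWithin_le_nhds
    have hmap : Tendsto (fun r : ℝ => s * r)
        (nhdsWithin 0 (Set.Ioi 0)) (nhdsWithin 0 (Set.Ioi 0)) := by
      rw [tendsto_nhdsWithin_iff]
      refine ⟨hmap0, ?_⟩
      filter_upwards [self_mem_nhdsWithin] with r hr
      exact mul_pos hs hr
    have hu : Tendsto (fun r : ℝ => Real.tanh (s * r) / (s * r))
        (nhdsWithin 0 (Set.Ioi 0)) (nhds 1) := htanhdiv.comp hmap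
    have htt : Tendsto (fun r : ℝ => Real.tanh (s * r))
        (nhdsWithin 0 (Set.Ioi 0)) (nhds 0) := by
      have := (ctanh.tendsto 0).comp hmap0
      simpa [Function.comp_def, Real.tanh_zero] using this
    have hnum : Tendsto (fun r : ℝ => Real.tanh (s * r) / (s * r)
        + (1 - Real.tanh (s * r) ^ 2)) (nhdsWithin 0 (Set.Ioi 0)) (nhds 2) := by
      have h1 : Tendsto (fun r : ℝ => 1 - Real.tanh (s * r) ^ 2)
          (nhdsWithin 0 (Set.Ioi 0)) (nhds 1) := by
        have h0 : Tendsto (fun _ : ℝ => (1:ℝ)) (nhdsWithin 0 (Set.Ioi 0)) (nhds 1) :=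
          tendsto_const_nhds
        have := h0.sub (htt.pow 2)
        norm_num at this
        exact this
      have := hu.add h1
      norm_num at this
      exact this
    have hdenom : Tendsto (fun r : ℝ => 2 * Real.sqrt (Real.tanh (s * r) / (s * r)))
        (nhdsWithin 0 (Set.Ioi 0)) (nhds 2) := by
      have := hu.sqrt.const_mul (2 : ℝ)
      norm_num at this
      exact this
    have hquot : Tendsto (fun r : ℝ => (Real.tanh (s * r) / (s * r)
        + (1 - Real.tanh (s * r) ^ 2)) / (2 * Real.sqrt (Real.tanh (s * r) / (s * r))))
        (nhdsWithin 0 (Set.Ioi 0)) (nhds 1) := by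
      have := hnum.div hdenom (by norm_num : (2:ℝ) ≠ 0)
      norm_num at this
      exact this
    have hFeq : ∀ᶠ r in nhdsWithin 0 (Set.Ioi 0), (Real.tanh (s * r) / (s * r)
        + (1 - Real.tanh (s * r) ^ 2)) / (2 * Real.sqrt (Real.tanh (s * r) / (s * r)))
        = deriv (lamμ μ) r := by
      filter_upwards [self_mem_nhdsWithin] with r hr
      rw [hderiv r hr]
      have hx : 0 < s * r := mul_pos hs hr
      have ht : 0 < Real.tanh (s * r) := mytanh_pos hx
      have hw : 0 < Real.sqrt (s * r * Real.tanh (s * r)) :=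
        Real.sqrt_pos.mpr (by positivity)
      have hsq : Real.sqrt (Real.tanh (s * r) / (s * r))
          = Real.sqrt (s * r * Real.tanh (s * r)) / (s * r) := by
        rw [show Real.tanh (s * r) / (s * r)
            = s * r * Real.tanh (s * r) / (s * r) ^ 2 by field_simp]
        rw [Real.sqrt_div (by positivity), Real.sqrt_sq hx.le]
      rw [hsq]
      show _ = N r / (2 * s * lamμ μ r)
      rw [hden r hr]
      have hNr : N r = Real.tanh (s * r) + s * r * (1 - Real.tanh (s * r) ^ 2) := rfl
      rw [hNr]
      have e1 : 2 * (Real.sqrt (s * r * Real.tanh (s * r)) / (s * r))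
          = 2 * Real.sqrt (s * r * Real.tanh (s * r)) / (s * r) := by ring
      rw [e1, div_div_eq_mul_div]
      congr 1
      rw [add_mul, div_mul_cancel₀ _ hx.ne']
      ring
    exact hquot.congr' hFeq
  · -- limit at infinity
    have htanhs : 0 < Real.tanh s := mytanh_pos hs
    have hc : 0 < s * Real.tanh s := mul_pos hs htanhs
    have hbound : Tendsto (fun r : ℝ => (Real.sqrt (s * Real.tanh s * r))⁻¹)
        atTop (nhds 0) := by
      apply Tendsto.inv_tendsto_atTop
      exact mysqrt_atTop.comp (tendsto_id.const_mul_atTop hc)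
    have hFt : Tendsto F atTop (nhds 0) := by
      refine tendsto_of_tendsto_of_tendsto_of_le_of_le' tendsto_const_nhds hbound ?_ ?_
      · filter_upwards [eventually_gt_atTop 0] with r hr
        exact le_of_lt (div_pos (hNpos r hr) (by have := hlampos r hr; positivity))
      · filter_upwards [eventually_ge_atTop 1] with r hr
        have hr0 : 0 < r := lt_of_lt_of_le one_pos hr
        have hx : 0 < s * r := mul_pos hs hr0
        have ht : 0 < Real.tanh (s * r) := mytanh_pos hx
        have hNle : N r ≤ 2 := by
          have h1 : s * r * (1 - Real.tanh (s * r) ^ 2) < Real.tanh (s * r) :=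
            my_key_ineq hx
          have h2 : Real.tanh (s * r) < 1 := mytanh_lt_one _
          have hNr : N r = Real.tanh (s * r) + s * r * (1 - Real.tanh (s * r) ^ 2) := rfl
          rw [hNr]; linarith
        have hmono2 : s * Real.tanh s * r ≤ s * r * Real.tanh (s * r) := by
          have h1 : Real.tanh s ≤ Real.tanh (s * r) :=
            mytanh_mono (le_mul_of_one_le_right hs.le hr)
          nlinarith
        have hden2 : 2 * Real.sqrt (s * Real.tanh s * r) ≤ 2 * s * lamμ μ r := by
          rw [hden r hr0]
          have := Real.sqrt_le_sqrt hmono2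
          linarith
        have hw : 0 < Real.sqrt (s * Real.tanh s * r) :=
          Real.sqrt_pos.mpr (mul_pos hc hr0)
        have hdpos : 0 < 2 * Real.sqrt (s * Real.tanh s * r) := by linarith
        have hstep : F r ≤ 2 / (2 * Real.sqrt (s * Real.tanh s * r)) := by
          have hFr : F r = N r / (2 * s * lamμ μ r) := rfl
          rw [hFr]
          exact div_le_div₀ (by norm_num) hNle hdpos hden2
        have heq2 : 2 / (2 * Real.sqrt (s * Real.tanh s * r))
            = (Real.sqrt (s * Real.tanh s * r))⁻¹ := by
          field_simp
        linarith [hstep, heq2.le]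
    refine hFt.congr' ?_
    filter_upwards [eventually_gt_atTop 0] with r hr
    exact (hderiv r hr).symm
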